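/- Let 0 < r < n and let b = (b_1,...,b_r) be positive integers with b_1 + ... + b_r = n. Then Σ_{s=r}^{n} (-1)^s C(n,s) Σ_{a_1+...+a_r=s, a_i ≥ 1} a_1^{b_1-1}···a_r^{b_r-1} = 0. -/

import Mathlib

/-- Compositions of `m` into `k` positive parts. -/
def posCompositions (k m : ℕ) : Finset (Fin k → ℕ) :=
  (Finset.Nat.antidiagonalTuple k m).filter fun a => ∀ i, 0 < a i

open Finset Polynomial fwdDiff

lemma mem_posCompositions {k m : ℕ} {a : Fin k → ℕ} :
    a ∈ posCompositions k m ↔ (∑ i, a i = m) ∧ ∀ i, 0 < a i := by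
  simp [posCompositions, Finset.Nat.mem_antidiagonalTuple]

lemma posCompositions_eq_empty {k m : ℕ} (h : m < k) : posCompositions k m = ∅ := by
  ext a
  simp only [mem_posCompositions, Finset.notMem_empty, iff_false, not_and]
  intro hs hp
  have : k ≤ m := by
    calc k = ∑ _i : Fin k, 1 := by simp
    _ ≤ ∑ i, a i := Finset.sum_le_sum fun i _ => hp i
    _ = m := hs
  omega

lemma sum_posComp_succ (r s : ℕ) (F : (Fin (r+1) → ℕ) → ℚ) :
    ∑ a ∈ posCompositions (r+1) s, F a
      = ∑ m ∈ Finset.Icc 1 s, ∑ a ∈ posCompositions r (s - m), F (Fin.snoc a m) := by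
  rw [← Finset.sum_sigma (Finset.Icc 1 s) (fun m => posCompositions r (s - m)) (fun p => F (Fin.snoc p.2 p.1))]
  apply Finset.sum_nbij' (i := fun a => (⟨a (Fin.last r), Fin.init a⟩ : Σ _m : ℕ, Fin r → ℕ))
    (j := fun p => Fin.snoc p.2 p.1)
  · intro a ha
    rw [mem_posCompositions] at ha
    obtain ⟨hs, hp⟩ := ha
    rw [Fin.sum_univ_castSucc] at hs
    have hinit : ∑ i, Fin.init a i = ∑ i : Fin r, a i.castSucc := rfl
    simp only [Finset.mem_sigma, Finset.mem_Icc, mem_posCompositions]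
    exact ⟨⟨hp _, by omega⟩, by omega, fun i => hp _⟩
  · intro p hp
    simp only [Finset.mem_sigma, Finset.mem_Icc, mem_posCompositions] at hp
    obtain ⟨⟨h1, h2⟩, hs, hpos⟩ := hp
    rw [mem_posCompositions]
    constructor
    · rw [Fin.sum_univ_castSucc]
      simp only [Fin.snoc_castSucc, Fin.snoc_last]
      omega
    · intro i
      induction i using Fin.lastCases with
      | last => simpa using (by omega : 0 < p.fst)
      | cast j => simpa using hpos j
  · intro a _; exact Fin.snoc_init_self a
  · intro p _
    ext : 1
    · simp
    · simp [Fin.init_snoc]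
  · intro a _
    rw [Fin.snoc_init_self]


lemma exists_poly_sum_pow (p : ℕ) : ∃ R : ℚ[X], R.natDegree ≤ p + 1 ∧ R.eval 0 = 0 ∧
    ∀ s : ℕ, R.eval (s : ℚ) = ∑ t ∈ range s, (t : ℚ) ^ p := by
  refine ⟨∑ i ∈ range (p+1), C (_root_.bernoulli i * ((p+1).choose i : ℚ) / (p+1)) * X ^ (p+1-i),
    ?_, ?_, ?_⟩
  · apply Polynomial.natDegree_sum_le_of_forall_le
    intro i hi
    apply le_trans (Polynomial.natDegree_C_mul_le _ _)
    simpa using Nat.sub_le _ _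
  · rw [Polynomial.eval_finset_sum]
    apply Finset.sum_eq_zero
    intro i hi
    simp only [Finset.mem_range] at hi
    have : p + 1 - i ≠ 0 := by omega
    simp [zero_pow this]
  · intro s
    rw [Polynomial.eval_finset_sum, sum_range_pow]
    apply Finset.sum_congr rfl
    intro i _
    simp only [Polynomial.eval_mul, Polynomial.eval_C, Polynomial.eval_pow, Polynomial.eval_X]
    ring

lemma exists_poly_partial_sum (Q : ℚ[X]) : ∃ R : ℚ[X], R.natDegree ≤ Q.natDegree + 1 ∧
    R.eval 0 = 0 ∧ ∀ s : ℕ, R.eval (s : ℚ) = ∑ t ∈ range s, Q.eval (t : ℚ) := by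
  choose Rp hdeg h0 heval using exists_poly_sum_pow
  refine ⟨∑ j ∈ range (Q.natDegree + 1), C (Q.coeff j) * Rp j, ?_, ?_, ?_⟩
  · apply Polynomial.natDegree_sum_le_of_forall_le
    intro j hj
    simp only [Finset.mem_range] at hj
    exact le_trans (Polynomial.natDegree_C_mul_le _ _) (le_trans (hdeg j) (by omega))
  · simp [Polynomial.eval_finset_sum, h0]
  · intro s
    rw [Polynomial.eval_finset_sum]
    simp only [Polynomial.eval_mul, Polynomial.eval_C, heval]
    simp_rw [Finset.mul_sum]
    rw [Finset.sum_comm]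
    apply Finset.sum_congr rfl
    intro t _
    rw [Polynomial.eval_eq_sum_range]


lemma fwdDiff_poly (P : ℚ[X]) :
    Δ_[(1:ℕ)] (fun s : ℕ => P.eval (s : ℚ)) = fun s : ℕ => (P.comp (X + 1) - P).eval (s : ℚ) := by
  funext s
  simp [fwdDiff, Polynomial.eval_comp]

lemma natDegree_comp_sub_lt (P : ℚ[X]) (h : 0 < P.natDegree) :
    (P.comp (X + 1) - P).natDegree < P.natDegree := by
  have hP0 : P ≠ 0 := fun h0 => by simp [h0] at h
  have hq : ((X + 1 : ℚ[X])).natDegree = 1 := by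
    compute_degree!
  have hlc : (P.comp (X + 1)).leadingCoeff = P.leadingCoeff := by
    rw [Polynomial.leadingCoeff_comp (by rw [hq]; norm_num)]
    rw [show (X + 1 : ℚ[X]) = X + C 1 by simp, Polynomial.leadingCoeff_X_add_C, one_pow, mul_one]
  have hcomp0 : P.comp (X + 1) ≠ 0 := by
    intro h0
    rw [h0] at hlc
    simp at hlc
    exact hP0 (Polynomial.leadingCoeff_eq_zero.mp hlc.symm)
  have hdeg : (P.comp (X + 1)).degree = P.degree := by
    rw [Polynomial.degree_eq_natDegree hcomp0, Polynomial.degree_eq_natDegree hP0,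
      Polynomial.natDegree_comp, hq, mul_one]
  by_cases hz : P.comp (X + 1) - P = 0
  · rw [hz]; simpa using h
  · have := Polynomial.degree_sub_lt hdeg hcomp0 hlc
    rw [hdeg] at this
    exact Polynomial.natDegree_lt_natDegree hz this

lemma fwdDiff_iter_zero_fun (n : ℕ) : (fwdDiff (1:ℕ))^[n] (fun _ : ℕ => (0:ℚ)) = fun _ => 0 := by
  induction n with
  | zero => rfl
  | succ n ih => rw [Function.iterate_succ_apply, show Δ_[(1:ℕ)] (fun _ : ℕ => (0:ℚ)) = fun _ => 0 from funext fun _ => sub_self 0, ih]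

lemma fwdDiff_iter_poly_eq_zero : ∀ (n : ℕ) (P : ℚ[X]), P.natDegree < n →
    (fwdDiff (1:ℕ))^[n] (fun s : ℕ => P.eval (s : ℚ)) = fun _ => 0 := by
  intro n
  induction n with
  | zero => omega
  | succ n ih =>
    intro P hP
    rw [Function.iterate_succ_apply, fwdDiff_poly]
    by_cases h0 : P.natDegree = 0
    · have : P.comp (X + 1) - P = 0 := by
        obtain ⟨c, rfl⟩ := Polynomial.natDegree_eq_zero.mp h0
        simp
      rw [this]
      simpa using fwdDiff_iter_zero_fun n
    · exact ih _ (by have := natDegree_comp_sub_lt P (by omega); omega)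

lemma alternating_sum_poly (n : ℕ) (P : ℚ[X]) (hdeg : P.natDegree < n) :
    ∑ s ∈ range (n + 1), (-1 : ℚ) ^ s * (n.choose s : ℚ) * P.eval (s : ℚ) = 0 := by
  have h := fwdDiff_iter_eq_sum_shift (1:ℕ) (fun s : ℕ => P.eval (s:ℚ)) n 0
  rw [fwdDiff_iter_poly_eq_zero n P hdeg] at h
  simp only [zsmul_eq_mul, smul_eq_mul, zero_add] at h
  push_cast at h
  have key : ∑ k ∈ range (n+1), (-1:ℚ)^(n-k) * (n.choose k : ℚ) * P.eval ((k:ℚ)) = 0 := by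
    simpa using h.symm
  calc ∑ s ∈ range (n + 1), (-1 : ℚ) ^ s * (n.choose s : ℚ) * P.eval (s : ℚ)
      = (-1:ℚ)^n * ∑ k ∈ range (n+1), (-1:ℚ)^(n-k) * (n.choose k : ℚ) * P.eval ((k:ℚ)) := by
        rw [Finset.mul_sum]
        apply Finset.sum_congr rfl
        intro k hk
        simp only [Finset.mem_range] at hk
        have h2 : (-1:ℚ)^n * (-1:ℚ)^(n-k) = (-1:ℚ)^k := by
          rw [← pow_add, show n + (n - k) = 2 * (n - k) + k by omega, pow_add, pow_mul]
          norm_num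
        rw [← h2]; ring
    _ = 0 := by rw [key, mul_zero]
lemma key : ∀ (r : ℕ), 0 < r → ∀ (b : Fin r → ℕ), (∀ i, 0 < b i) →
    ∃ P : ℚ[X], P.natDegree ≤ (∑ i, b i) - 1 ∧
      ((∃ i, 2 ≤ b i) → P.eval 0 = 0) ∧
      ∀ s : ℕ, 1 ≤ s →
        P.eval (s : ℚ) = ∑ a ∈ posCompositions r s, ∏ i, (a i : ℚ) ^ (b i - 1) := by
  intro r
  induction r with
  | zero => omega
  | succ r ih =>
    intro _ b hb
    rcases Nat.eq_zero_or_pos r with rfl | hr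
    · -- base case: one part
      refine ⟨X ^ (b 0 - 1), ?_, ?_, ?_⟩
      · simp [Polynomial.natDegree_X_pow, Fin.sum_univ_one]
      · rintro ⟨i, hi⟩
        have hi0 : i = 0 := Fin.eq_zero i
        subst hi0
        simp [zero_pow (show b 0 - 1 ≠ 0 by omega)]
      · intro s hs
        have hset : posCompositions 1 s = {fun _ => s} := by
          ext a
          simp only [mem_posCompositions, Finset.mem_singleton]
          constructor
          · rintro ⟨hsum, _⟩
            funext i
            have : i = 0 := Fin.eq_zero i
            subst this
            simpa [Fin.sum_univ_one] using hsum
          · rintro rfl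
            exact ⟨by simp [Fin.sum_univ_one], fun _ => hs⟩
        rw [hset]
        simp [Fin.prod_univ_one]
    · -- inductive step
      set b' : Fin r → ℕ := fun i => b i.castSucc with hb'def
      set c := b (Fin.last r) with hcdef
      have hc1 : 1 ≤ c := hb _
      obtain ⟨Pr, hPrdeg, hPr0, hPreval⟩ := ih hr b' (fun i => hb _)
      set n' := ∑ i, b' i with hn'def
      have hn'1 : 1 ≤ n' := by
        calc 1 ≤ r := hr
        _ = ∑ _i : Fin r, 1 := by simp
        _ ≤ ∑ i, b' i := Finset.sum_le_sum fun i _ => hb _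
      have htot : ∑ i, b i = n' + c := by
        rw [Fin.sum_univ_castSucc]
      have hRex : ∀ k : ℕ, ∃ R : ℚ[X], R.natDegree ≤ (c - 1 - k) + (n' - 1) + 1 ∧
          R.eval 0 = 0 ∧
          ∀ s : ℕ, R.eval (s : ℚ) =
            ∑ t ∈ range s, (-1:ℚ)^(c-1-k) * (t:ℚ)^(c-1-k) * Pr.eval (t:ℚ) := by
        intro k
        obtain ⟨R, h1, h2, h3⟩ :=
          exists_poly_partial_sum (C ((-1:ℚ)^(c-1-k)) * X^(c-1-k) * Pr)
        refine ⟨R, le_trans h1 ?_, h2, fun s => by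
          rw [h3 s]
          apply Finset.sum_congr rfl
          intro t _
          simp⟩
        have hd1 : (C ((-1:ℚ)^(c-1-k)) * X^(c-1-k) * Pr).natDegree
            ≤ (c-1-k) + Pr.natDegree := by
          apply le_trans (Polynomial.natDegree_mul_le)
          have : (C ((-1:ℚ)^(c-1-k)) * X^(c-1-k)).natDegree ≤ c-1-k :=
            le_trans (Polynomial.natDegree_C_mul_le _ _) (le_of_eq (Polynomial.natDegree_X_pow _))
          omega
        omega
      choose R hRdeg hR0 hReval using hRex
      refine ⟨(∑ k ∈ range c, C (((c-1).choose k : ℕ) : ℚ) * X^k * R k)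
          - C (Pr.eval 0) * X^(c-1), ?_, ?_, ?_⟩
      · apply le_trans (Polynomial.natDegree_sub_le _ _)
        rw [htot]
        apply max_le
        · apply Polynomial.natDegree_sum_le_of_forall_le
          intro k hk
          simp only [Finset.mem_range] at hk
          calc (C (((c-1).choose k : ℕ) : ℚ) * X^k * R k).natDegree
              ≤ (C (((c-1).choose k : ℕ) : ℚ) * X^k).natDegree + (R k).natDegree :=
                Polynomial.natDegree_mul_le
            _ ≤ k + ((c - 1 - k) + (n' - 1) + 1) := by
                have : (C (((c-1).choose k : ℕ) : ℚ) * X^k).natDegree ≤ k :=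
                  le_trans (Polynomial.natDegree_C_mul_le _ _)
                    (le_of_eq (Polynomial.natDegree_X_pow _))
                have := hRdeg k
                omega
            _ ≤ n' + c - 1 := by omega
        · calc (C (Pr.eval 0) * X^(c-1)).natDegree ≤ c - 1 :=
              le_trans (Polynomial.natDegree_C_mul_le _ _)
                (le_of_eq (Polynomial.natDegree_X_pow _))
          _ ≤ n' + c - 1 := by omega
      · rintro ⟨i, hi⟩
        simp only [Polynomial.eval_sub, Polynomial.eval_finset_sum, Polynomial.eval_mul,
          Polynomial.eval_C, Polynomial.eval_pow, Polynomial.eval_X]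
        have hsum0 : ∑ k ∈ range c, (((c-1).choose k : ℕ) : ℚ) * 0^k * (R k).eval 0 = 0 := by
          apply Finset.sum_eq_zero
          intro k _
          rw [hR0]
          ring
        rw [hsum0, zero_sub, neg_eq_zero]
        rcases Nat.lt_or_ge c 2 with hc2 | hc2
        · have hne : i ≠ Fin.last r := by
            intro h
            rw [h, ← hcdef] at hi
            omega
          obtain ⟨j, rfl⟩ := Fin.exists_castSucc_eq.mpr hne
          rw [hPr0 ⟨j, hi⟩]
          ring
        · rw [zero_pow (show c - 1 ≠ 0 by omega)]
          ring
      · intro s hs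
        -- split the composition sum
        rw [sum_posComp_succ r s (fun a => ∏ i, (a i : ℚ)^(b i - 1))]
        have hsplit : ∀ m : ℕ, ∀ a : Fin r → ℕ,
            (∏ i : Fin (r+1), ((Fin.snoc a m : Fin (r+1) → ℕ) i : ℚ)^(b i - 1))
            = (m:ℚ)^(c-1) * ∏ i : Fin r, (a i : ℚ)^(b' i - 1) := by
          intro m a
          rw [Fin.prod_univ_castSucc]
          simp only [Fin.snoc_castSucc, Fin.snoc_last]
          rw [mul_comm]
        have step1 : ∑ m ∈ Finset.Icc 1 s, ∑ a ∈ posCompositions r (s - m),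
              (∏ i : Fin (r+1), ((Fin.snoc a m : Fin (r+1) → ℕ) i : ℚ)^(b i - 1))
            = ∑ m ∈ Finset.Icc 1 s, (m:ℚ)^(c-1) *
              ∑ a ∈ posCompositions r (s - m), ∏ i : Fin r, (a i : ℚ)^(b' i - 1) := by
          apply Finset.sum_congr rfl
          intro m _
          rw [Finset.mul_sum]
          exact Finset.sum_congr rfl fun a _ => hsplit m a
        rw [step1]
        -- reindex m ↦ t = s - m
        have step2 : ∑ m ∈ Finset.Icc 1 s, (m:ℚ)^(c-1) *
              ∑ a ∈ posCompositions r (s - m), ∏ i : Fin r, (a i : ℚ)^(b' i - 1)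
            = ∑ t ∈ range s, (((s - t : ℕ)):ℚ)^(c-1) *
              ∑ a ∈ posCompositions r t, ∏ i : Fin r, (a i : ℚ)^(b' i - 1) := by
          apply Finset.sum_nbij' (i := fun m => s - m) (j := fun t => s - t)
          · intro m hm
            simp only [Finset.mem_Icc] at hm
            simp only [Finset.mem_range]
            omega
          · intro t ht
            simp only [Finset.mem_range] at ht
            simp only [Finset.mem_Icc]
            omega
          · intro m hm
            simp only [Finset.mem_Icc] at hm
            omega
          · intro t ht
            simp only [Finset.mem_range] at ht
            omega
          · intro m hm
            simp only [Finset.mem_Icc] at hm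
            have : s - (s - m) = m := by omega
            rw [this]
        rw [step2]
        -- now express the t-sum with Pr
        have step3 : ∀ t ∈ range s,
            (((s - t : ℕ)):ℚ)^(c-1) *
              ∑ a ∈ posCompositions r t, ∏ i : Fin r, (a i : ℚ)^(b' i - 1)
            = ((s:ℚ) - (t:ℚ))^(c-1) * (if t = 0 then 0 else Pr.eval (t:ℚ)) := by
          intro t ht
          simp only [Finset.mem_range] at ht
          have hcast : (((s - t : ℕ)):ℚ) = (s:ℚ) - (t:ℚ) := by
            push_cast [Nat.cast_sub (le_of_lt ht)]
            ring
          rw [hcast]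
          congr 1
          rcases Nat.eq_zero_or_pos t with rfl | ht1
          · rw [posCompositions_eq_empty hr]
            simp
          · rw [if_neg (by omega), hPreval t ht1]
        rw [Finset.sum_congr rfl step3]
        -- evaluate the polynomial
        simp only [Polynomial.eval_sub, Polynomial.eval_finset_sum, Polynomial.eval_mul,
          Polynomial.eval_C, Polynomial.eval_pow, Polynomial.eval_X]
        simp_rw [hReval]
        -- swap sums on the LHS
        rw [show ∑ k ∈ range c, (((c-1).choose k : ℕ) : ℚ) * (s:ℚ)^k *
              ∑ t ∈ range s, (-1:ℚ)^(c-1-k) * (t:ℚ)^(c-1-k) * Pr.eval (t:ℚ)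
            = ∑ t ∈ range s, ∑ k ∈ range c, (((c-1).choose k : ℕ) : ℚ) * (s:ℚ)^k *
              ((-1:ℚ)^(c-1-k) * (t:ℚ)^(c-1-k) * Pr.eval (t:ℚ)) by
          simp_rw [Finset.mul_sum]
          exact Finset.sum_comm]
        have binom : ∀ t : ℕ, ∑ k ∈ range c, (((c-1).choose k : ℕ) : ℚ) * (s:ℚ)^k *
              ((-1:ℚ)^(c-1-k) * (t:ℚ)^(c-1-k) * Pr.eval (t:ℚ))
            = ((s:ℚ) - (t:ℚ))^(c-1) * Pr.eval (t:ℚ) := by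
          intro t
          have hb : ((s:ℚ) + (-(t:ℚ)))^(c-1)
              = ∑ k ∈ range (c-1+1), (s:ℚ)^k * (-(t:ℚ))^(c-1-k) * ((c-1).choose k : ℕ) :=
            add_pow _ _ _
          rw [show c - 1 + 1 = c by omega] at hb
          rw [show ((s:ℚ) - (t:ℚ)) = (s:ℚ) + (-(t:ℚ)) by ring, hb, Finset.sum_mul]
          apply Finset.sum_congr rfl
          intro k _
          rw [neg_pow]
          ring
        rw [Finset.sum_congr rfl (fun t _ => binom t)]
        -- compare term by term: only t = 0 differs
        have h0mem : (0:ℕ) ∈ range s := Finset.mem_range.mpr hs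
        have hL : ∑ x ∈ range s, ((s:ℚ) - (x:ℚ))^(c-1) * (if x = 0 then 0 else Pr.eval (x:ℚ))
            = ∑ x ∈ (range s).erase 0, ((s:ℚ) - (x:ℚ))^(c-1) * Pr.eval (x:ℚ) := by
          rw [← Finset.add_sum_erase _ _ h0mem]
          rw [if_pos rfl, mul_zero, zero_add]
          exact Finset.sum_congr rfl fun x hx => by rw [if_neg (Finset.mem_erase.mp hx).1]
        have hR2 : ∑ t ∈ range s, ((s:ℚ) - (t:ℚ))^(c-1) * Pr.eval (t:ℚ)
            = ((s:ℚ))^(c-1) * Pr.eval 0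
              + ∑ x ∈ (range s).erase 0, ((s:ℚ) - (x:ℚ))^(c-1) * Pr.eval (x:ℚ) := by
          rw [← Finset.add_sum_erase _ _ h0mem]
          norm_num
        rw [hL, hR2]
        ring

theorem stmt4 (n r : ℕ) (hr : 0 < r) (hrn : r < n) (b : Fin r → ℕ) (hb : ∀ i, 0 < b i)
    (hsum : ∑ i, b i = n) :
    ∑ s ∈ Finset.Icc r n, (-1 : ℤ) ^ s * (n.choose s : ℤ) *
      ∑ a ∈ posCompositions r s, ∏ i, (a i : ℤ) ^ (b i - 1) = 0 := by
  have hex : ∃ i, 2 ≤ b i := by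
    by_contra hcon
    push_neg at hcon
    have h1 : ∑ i, b i ≤ ∑ _i : Fin r, 1 :=
      Finset.sum_le_sum fun i _ => by have := hb i; have := hcon i; omega
    simp only [Finset.sum_const, Finset.card_univ, Fintype.card_fin, smul_eq_mul, mul_one] at h1
    omega
  obtain ⟨P, hdeg, h0, heval⟩ := key r hr b hb
  rw [hsum] at hdeg
  have hPz : ∀ s : ℕ, s < r → P.eval ((s:ℕ):ℚ) = 0 := by
    intro s hsr
    rcases Nat.eq_zero_or_pos s with rfl | hs1
    · simpa using h0 hex
    · rw [heval s hs1, posCompositions_eq_empty hsr, Finset.sum_empty]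
  have halt := alternating_sum_poly n P (by omega)
  rw [Finset.range_eq_Ico,
    ← Finset.sum_Ico_consecutive _ (Nat.zero_le r) (by omega : r ≤ n+1)] at halt
  have hfirst : ∑ s ∈ Finset.Ico 0 r, (-1:ℚ)^s * (n.choose s:ℚ) * P.eval (s:ℚ) = 0 :=
    Finset.sum_eq_zero fun s hsmem => by
      rw [hPz s (Finset.mem_Ico.mp hsmem).2, mul_zero]
  rw [hfirst, zero_add] at halt
  have hQ : ∑ s ∈ Finset.Icc r n, (-1:ℚ)^s * (n.choose s : ℚ) *
      ∑ a ∈ posCompositions r s, ∏ i, (a i : ℚ)^(b i - 1) = 0 := by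
    rw [← halt, ← Finset.Ico_add_one_right_eq_Icc]
    apply Finset.sum_congr rfl
    intro s hsmem
    rw [heval s (le_trans hr (Finset.mem_Ico.mp hsmem).1)]
  have hcast : ((∑ s ∈ Finset.Icc r n, (-1 : ℤ) ^ s * (n.choose s : ℤ) *
      ∑ a ∈ posCompositions r s, ∏ i, (a i : ℤ) ^ (b i - 1) : ℤ) : ℚ) = 0 := by
    push_cast
    exact hQ
  exact_mod_cast hcast
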